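/- Let d ∈ ℕ and let f : 𝔻 → 𝔹_d satisfy f(0) = 0 and ρ(f(z), f(w)) ≤ L·δ(z,w) for all z,w ∈ 𝔻 and some constant L < ∞. Then for every α > 0 there exists r₀ ∈ (0,1) such that ‖f(z)‖ ≤ 1 − (1−|z|)^α for all z ∈ 𝔻 with |z| ≥ r₀. -/

import Mathlib

open Complex Metric

/-- The reproducing kernel of the Dirichlet space. -/
noncomputable def dirK (z w : ℂ) : ℂ :=
  if z * (starRingEnd ℂ) w = 0 then 1
  else (1 / (z * (starRingEnd ℂ) w)) * Complex.log (1 / (1 - z * (starRingEnd ℂ) w))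

/-- The metric on the disc induced by the Dirichlet space. -/
noncomputable def dirDelta (z w : ℂ) : ℝ :=
  Real.sqrt (1 - ‖dirK z w‖ ^ 2 / ((dirK z z).re * (dirK w w).re))

/-- The pseudohyperbolic metric on the unit ball of `ℂ^d`. -/
noncomputable def pseudoHyp {d : ℕ} (z w : EuclideanSpace ℂ (Fin d)) : ℝ :=
  Real.sqrt (1 - (1 - ‖z‖ ^ 2) * (1 - ‖w‖ ^ 2) / ‖1 - (inner ℂ w z : ℂ)‖ ^ 2)

noncomputable def Gg (c : ℝ) : ℝ := if c = 0 then 1 else Real.log (1 / (1 - c)) / c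

lemma dirK_eq (z w : ℂ) (c : ℝ) (hc1 : c < 1)
    (h : z * (starRingEnd ℂ) w = (c : ℂ)) : dirK z w = ((Gg c : ℝ) : ℂ) := by
  unfold dirK Gg
  rw [h]
  by_cases hc : c = 0
  · simp [hc]
  · rw [if_neg (by exact_mod_cast hc), if_neg hc]
    have h1 : (1 : ℂ) - (c : ℂ) = ((1 - c : ℝ) : ℂ) := by push_cast; ring
    have h2 : (0:ℝ) ≤ 1 / (1 - c) := le_of_lt (one_div_pos.mpr (by linarith))
    rw [h1]
    rw [show (1 : ℂ) / ((1 - c : ℝ) : ℂ) = ((1 / (1-c) : ℝ) : ℂ) by push_cast; ring]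
    rw [← Complex.ofReal_log h2]
    push_cast
    field_simp

lemma A_pos {v : ℝ} (h0 : 0 < v) (h1 : v < 1) : 0 < Real.log (1/(1-v)) :=
  Real.log_pos ((one_lt_div (by linarith)).mpr (by linarith))

lemma A_mono {v w : ℝ} (h0 : 0 ≤ v) (hvw : v ≤ w) (h1 : w < 1) :
    Real.log (1/(1-v)) ≤ Real.log (1/(1-w)) := by
  apply Real.log_le_log (one_div_pos.mpr (by linarith))
  apply one_div_le_one_div_of_le (by linarith) (by linarith)

lemma Gg_pos {c : ℝ} (h0 : 0 ≤ c) (h1 : c < 1) : 0 < Gg c := by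
  unfold Gg
  by_cases hc : c = 0
  · simp [hc]
  · rw [if_neg hc]
    have hc0 : 0 < c := lt_of_le_of_ne h0 (Ne.symm hc)
    exact div_pos (A_pos hc0 h1) hc0

lemma conj_ray (s t : ℝ) (z : ℂ) :
    ((s:ℂ)*z) * (starRingEnd ℂ) ((t:ℂ)*z) = ((s*t*Complex.normSq z : ℝ) : ℂ) := by
  rw [map_mul, Complex.conj_ofReal,
    show ((s:ℂ)*z)*((t:ℂ)*(starRingEnd ℂ) z) = ((s:ℂ)*(t:ℂ))*(z*(starRingEnd ℂ) z) by ring,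
    Complex.mul_conj]
  push_cast; ring

lemma dirDelta_ray_le (z : ℂ) (hz1 : ‖z‖ < 1) (hz0 : z ≠ 0) (s t lam : ℝ)
    (hs : 0 < s) (hst : s ≤ t) (ht1 : t ≤ 1) (hlam : 1 ≤ lam)
    (hA : Real.log (1/(1 - t^2 * Complex.normSq z)) ≤
      lam * Real.log (1/(1 - s^2 * Complex.normSq z))) :
    dirDelta ((s:ℂ)*z) ((t:ℂ)*z) ≤ Real.sqrt (1 - 1/lam) := by
  set u := Complex.normSq z with hu
  have hu0 : 0 < u := Complex.normSq_pos.mpr hz0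
  have hu1 : u < 1 := by
    rw [hu, Complex.normSq_eq_norm_sq]; nlinarith [norm_nonneg z]
  have ht0 : 0 < t := lt_of_lt_of_le hs hst
  have hv1pos : 0 < s^2*u := by positivity
  have hv2le : t^2*u ≤ u := by
    nlinarith [mul_nonneg (mul_nonneg (sub_nonneg.mpr ht1) (by linarith : (0:ℝ) ≤ 1+t)) hu0.le]
  have hv21 : t^2*u < 1 := lt_of_le_of_lt hv2le hu1
  have hcle : s*t*u ≤ t^2*u := by
    nlinarith [mul_nonneg (mul_nonneg (sub_nonneg.mpr hst) ht0.le) hu0.le]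
  have hv1c : s^2*u ≤ s*t*u := by
    nlinarith [mul_nonneg (mul_nonneg (sub_nonneg.mpr hst) hs.le) hu0.le]
  have hc1 : s*t*u < 1 := lt_of_le_of_lt hcle hv21
  have hv11 : s^2*u < 1 := lt_of_le_of_lt (le_trans hv1c hcle) hv21
  -- kernels
  rw [dirDelta, dirK_eq _ _ (s*t*u) hc1 (conj_ray s t z),
    dirK_eq _ _ (s*s*u) (by nlinarith) (conj_ray s s z),
    dirK_eq _ _ (t*t*u) (by nlinarith) (conj_ray t t z),
    Complex.ofReal_re, Complex.ofReal_re]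
  have hss : s*s*u = s^2*u := by ring
  have htt : t*t*u = t^2*u := by ring
  rw [hss, htt]
  apply Real.sqrt_le_sqrt
  have hGc : 0 < Gg (s*t*u) := Gg_pos (by positivity) hc1
  have hG1 : 0 < Gg (s^2*u) := Gg_pos (by positivity) hv11
  have hG2 : 0 < Gg (t^2*u) := Gg_pos (by positivity) hv21
  have habs : ‖((Gg (s*t*u) : ℝ) : ℂ)‖ = Gg (s*t*u) := by
    rw [Complex.norm_real, Real.norm_eq_abs, abs_of_pos hGc]
  rw [habs]
  have key : 1/lam ≤ (Gg (s*t*u))^2 / (Gg (s^2*u) * Gg (t^2*u)) := by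
    set A1 := Real.log (1/(1 - s^2*u)) with hA1
    set A2 := Real.log (1/(1 - t^2*u)) with hA2
    set Ac := Real.log (1/(1 - s*t*u)) with hAc
    have hA1pos : 0 < A1 := A_pos hv1pos hv11
    have hA2pos : 0 < A2 := A_pos (by positivity) hv21
    have hA1c : A1 ≤ Ac := A_mono (le_of_lt hv1pos) hv1c hc1
    have hGceq : Gg (s*t*u) = Ac / (s*t*u) := by
      rw [Gg, if_neg (by positivity)]
    have hG1eq : Gg (s^2*u) = A1 / (s^2*u) := by
      rw [Gg, if_neg (by positivity)]
    have hG2eq : Gg (t^2*u) = A2 / (t^2*u) := by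
      rw [Gg, if_neg (by positivity)]
    have hAcpos : 0 < Ac := lt_of_lt_of_le hA1pos hA1c
    have heq : (Ac/(s*t*u))^2 / ((A1/(s^2*u)) * (A2/(t^2*u))) = Ac^2/(A1*A2) := by
      have h1 : s*t*u ≠ 0 := by positivity
      have h2 : s^2*u ≠ 0 := by positivity
      have h3 : t^2*u ≠ 0 := by positivity
      field_simp
    rw [hGceq, hG1eq, hG2eq, heq]
    have hlam0 : 0 < lam := lt_of_lt_of_le one_pos hlam
    rw [div_le_div_iff₀ hlam0 (by positivity)]
    nlinarith [mul_le_mul_of_nonneg_left hA (le_of_lt hA1pos), sq_nonneg (Ac - A1)]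
  have hpos : 0 < Gg (s*t*u)^2 / (Gg (s^2*u) * Gg (t^2*u)) := by positivity
  linarith

lemma dirDelta_zero_le (z : ℂ) (hz1 : ‖z‖ < 1) (hz0 : z ≠ 0) (t lam : ℝ)
    (ht0 : 0 < t) (ht1 : t ≤ 1) (hlam : 1 ≤ lam)
    (hG : Gg (t^2 * Complex.normSq z) ≤ lam) :
    dirDelta 0 ((t:ℂ)*z) ≤ Real.sqrt (1 - 1/lam) := by
  set u := Complex.normSq z with hu
  have hu0 : 0 < u := Complex.normSq_pos.mpr hz0
  have hu1 : u < 1 := by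
    rw [hu, Complex.normSq_eq_norm_sq]; nlinarith [norm_nonneg z]
  have hv2le : t^2*u ≤ u := by
    nlinarith [mul_nonneg (mul_nonneg (sub_nonneg.mpr ht1) (by linarith : (0:ℝ) ≤ 1+t)) hu0.le]
  have hv21 : t^2*u < 1 := lt_of_le_of_lt hv2le hu1
  have hK0 : dirK 0 ((t:ℂ)*z) = 1 := by unfold dirK; simp
  have hK00 : dirK 0 0 = 1 := by unfold dirK; simp
  rw [dirDelta, hK0, hK00, dirK_eq _ _ (t*t*u) (by nlinarith) (conj_ray t t z),
    Complex.ofReal_re]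
  have htt : t*t*u = t^2*u := by ring
  rw [htt]
  apply Real.sqrt_le_sqrt
  have hG2 : 0 < Gg (t^2*u) := Gg_pos (by positivity) hv21
  have hlam0 : 0 < lam := lt_of_lt_of_le one_pos hlam
  have : 1/lam ≤ 1/Gg (t^2*u) := one_div_le_one_div_of_le hG2 hG
  simp only [map_one, norm_one, Complex.one_re, one_pow, one_mul]
  linarith

lemma pseudo_step {d : ℕ} (a b : EuclideanSpace ℂ (Fin d)) (ha : ‖a‖ < 1) (hb : ‖b‖ < 1)
    (h : pseudoHyp a b ≤ 1 / 2) : (1 - ‖a‖) / 3 ≤ 1 - ‖b‖ := by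
  rw [pseudoHyp] at h
  set x := ‖a‖ with hx
  set y := ‖b‖ with hy
  have hx0 : 0 ≤ x := norm_nonneg _
  have hy0 : 0 ≤ y := norm_nonneg _
  have hxy : x * y < 1 := by nlinarith
  have hre : ((inner ℂ b a : ℂ)).re ≤ x * y := by
    calc ((inner ℂ b a : ℂ)).re ≤ ‖(inner ℂ b a : ℂ)‖ := Complex.re_le_norm _
    _ = ‖(inner ℂ b a : ℂ)‖ := rfl
    _ ≤ ‖b‖ * ‖a‖ := norm_inner_le_norm b a
    _ = x * y := by ring
  set c := ‖1 - (inner ℂ b a : ℂ)‖ with hc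
  have hcge : 1 - x * y ≤ c := by
    calc 1 - x * y ≤ 1 - ((inner ℂ b a : ℂ)).re := by linarith
    _ = ((1 : ℂ) - (inner ℂ b a : ℂ)).re := by simp
    _ ≤ ‖1 - (inner ℂ b a : ℂ)‖ := Complex.re_le_norm _
  have hcpos : 0 < c := lt_of_lt_of_le (by linarith) hcge
  have hc2 : (0:ℝ) < c ^ 2 := by positivity
  have key : 1 - (1 - x ^ 2) * (1 - y ^ 2) / c ^ 2 ≤ 1 / 4 := by
    by_cases hnn : 0 ≤ 1 - (1 - x ^ 2) * (1 - y ^ 2) / c ^ 2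
    · have heq := Real.sq_sqrt hnn
      have h2 : Real.sqrt (1 - (1 - x ^ 2) * (1 - y ^ 2) / c ^ 2) ^ 2 ≤ (1/2)^2 := by
        have h0 := Real.sqrt_nonneg (1 - (1 - x ^ 2) * (1 - y ^ 2) / c ^ 2)
        nlinarith [h]
      rw [heq] at h2; linarith
    · linarith
  have key2 : (3/4 : ℝ) * c ^ 2 ≤ (1 - x ^ 2) * (1 - y ^ 2) :=
    (le_div_iff₀ hc2).mp (by linarith)
  have key3 : (3/4 : ℝ) * (1 - x*y) ^ 2 ≤ (1 - x ^ 2) * (1 - y ^ 2) := by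
    nlinarith [hcge, hcpos]
  have h4 : 2*(y-x) ≤ 1 - x*y := by
    nlinarith [key3, hxy, sq_nonneg (2*(y-x)+(1-x*y)), sq_nonneg (x-y)]
  have h5 : 0 ≤ (1-x)*(1-y) := mul_nonneg (by linarith) (by linarith)
  nlinarith [h4, h5]

set_option maxHeartbeats 2000000 in
/-- If `f : 𝔻 → 𝔹_d` with `f(0) = 0` is Lipschitz from the Dirichlet metric to the
pseudohyperbolic metric, then for every `α > 0` there is `r₀ ∈ (0,1)` such that
`‖f(z)‖ ≤ 1 − (1−|z|)^α` whenever `|z| ≥ r₀`. -/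
theorem lipschitz_power_growth (d : ℕ) (f : ℂ → EuclideanSpace ℂ (Fin d)) (L : ℝ)
    (hmap : ∀ z ∈ ball (0 : ℂ) 1, ‖f z‖ < 1) (h0 : f 0 = 0)
    (hLip : ∀ z ∈ ball (0 : ℂ) 1, ∀ w ∈ ball (0 : ℂ) 1,
      pseudoHyp (f z) (f w) ≤ L * dirDelta z w) :
    ∀ α : ℝ, 0 < α → ∃ r₀ ∈ Set.Ioo (0 : ℝ) 1, ∀ z ∈ ball (0 : ℂ) 1,
      r₀ ≤ ‖z‖ → ‖f z‖ ≤ 1 - (1 - ‖z‖) ^ α := by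
  intro α hα
  set M := max L 1 with hMdef
  have hM1 : (1:ℝ) ≤ M := le_max_right _ _
  have hM0 : (0:ℝ) < M := by linarith
  have hLM : L ≤ M := le_max_left _ _
  set u₀ : ℝ := 1/(4*M^2) with hu₀def
  have hu₀pos : 0 < u₀ := by positivity
  have hu₀le : u₀ ≤ 1/4 := by
    rw [hu₀def]
    rw [div_le_div_iff₀ (by positivity) (by norm_num)]
    nlinarith
  set lam : ℝ := 1/(1-u₀) with hlamdef
  have hlam1 : 1 < lam := by
    rw [hlamdef, lt_div_iff₀ (by linarith)]
    linarith
  have hlamle : (1:ℝ) ≤ lam := hlam1.le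
  set A0 : ℝ := Real.log (1/(1-u₀)) with hA0def
  have hA0pos : 0 < A0 := A_pos hu₀pos (by linarith)
  have hloglam : 0 < Real.log lam := Real.log_pos hlam1
  have hlog3 : 0 < Real.log 3 := Real.log_pos (by norm_num)
  set bet : ℝ := Real.log 3 / Real.log lam with hbetdef
  have hbet : 0 < bet := div_pos hlog3 hloglam
  set C : ℝ := 2*Real.log 3 + bet * |Real.log A0| with hCdef
  have hC0 : 0 < C := by positivity
  set X₀ : ℝ := max (max ((4*bet/α)^2) (2*C/α)) 1 with hX₀def
  have hX₀1 : (1:ℝ) ≤ X₀ := le_max_right _ _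
  have hX₀a : (4*bet/α)^2 ≤ X₀ := le_trans (le_max_left _ _) (le_max_left _ _)
  have hX₀b : 2*C/α ≤ X₀ := le_trans (le_max_right _ _) (le_max_left _ _)
  have hX₀pos : 0 < X₀ := by linarith
  set ε₀ : ℝ := min (Real.exp (-X₀)) (1/2) with hε₀def
  have hε₀pos : 0 < ε₀ := lt_min (Real.exp_pos _) (by norm_num)
  have hε₀le : ε₀ ≤ 1/2 := min_le_right _ _
  have hε₀exp : ε₀ ≤ Real.exp (-X₀) := min_le_left _ _
  refine ⟨1 - ε₀, ⟨by linarith, by linarith⟩, ?_⟩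
  intro z hz hrge
  have hr1 : ‖z‖ < 1 := by
    simpa [mem_ball, Complex.dist_eq] using hz
  set r := ‖z‖ with hrdef
  have hrhalf : (1/2:ℝ) ≤ r := by linarith
  have hr0 : (0:ℝ) < r := by linarith
  have hz0 : z ≠ 0 := by
    intro h
    rw [h] at hrdef
    simp at hrdef
    linarith [hrdef ▸ hr0]
  set u := Complex.normSq z with hudef
  have hureq : u = r^2 := by rw [hudef, Complex.normSq_eq_norm_sq]
  have hu0 : 0 < u := by rw [hureq]; positivity
  have hu1 : u < 1 := by rw [hureq]; exact pow_lt_one₀ hr0.le hr1 two_ne_zero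
  have huq : 1/4 ≤ u := by
    rw [hureq]
    calc (1/4:ℝ) = (1/2)^2 := by norm_num
    _ ≤ r^2 := pow_le_pow_left₀ (by norm_num) hrhalf 2
  have hu₀u : u₀ ≤ u := le_trans hu₀le huq
  set Au : ℝ := Real.log (1/(1-u)) with hAudef
  have hAupos : 0 < Au := A_pos hu0 hu1
  have hA0Au : A0 ≤ Au := A_mono hu₀pos.le hu₀u hu1
  -- chain existence
  have hex : ∃ n : ℕ, Au ≤ A0 * lam ^ n := by
    obtain ⟨n, hn⟩ := pow_unbounded_of_one_lt (Au / A0) hlam1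
    refine ⟨n, ?_⟩
    rw [div_lt_iff₀ hA0pos] at hn
    linarith [mul_comm (lam^n) A0]
  obtain ⟨n, hnspec, hnmin⟩ : ∃ n : ℕ, Au ≤ A0 * lam ^ n ∧ ∀ m, m < n → ¬(Au ≤ A0 * lam ^ m) :=
    ⟨Nat.find hex, Nat.find_spec hex, fun m hm => Nat.find_min hex hm⟩
  -- the chain
  set v : ℕ → ℝ := fun i => 1 - Real.exp (-(min (A0 * lam^i) Au)) with hvdef
  have hminpos : ∀ i, 0 < min (A0*lam^i) Au := fun i => lt_min (by positivity) hAupos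
  have hv_lt1 : ∀ i, v i < 1 := by
    intro i
    have := Real.exp_pos (-(min (A0 * lam^i) Au))
    simp only [hvdef]
    linarith
  have hv_pos : ∀ i, 0 < v i := by
    intro i
    have h1 : Real.exp (-(min (A0 * lam^i) Au)) < 1 := by
      rw [Real.exp_lt_one_iff]
      linarith [hminpos i]
    simp only [hvdef]
    linarith
  have hexpAu : Real.exp (-Au) = 1 - u := by
    rw [hAudef, one_div, Real.log_inv, neg_neg, Real.exp_log (by linarith)]
  have hv_le_u : ∀ i, v i ≤ u := by
    intro i
    have h1 : Real.exp (-Au) ≤ Real.exp (-(min (A0 * lam^i) Au)) := by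
      apply Real.exp_le_exp.mpr
      have := min_le_right (A0*lam^i) Au
      linarith
    simp only [hvdef]
    linarith [hexpAu]
  have hAv : ∀ i, Real.log (1/(1 - v i)) = min (A0*lam^i) Au := by
    intro i
    have h1 : 1 - v i = Real.exp (-(min (A0*lam^i) Au)) := by
      simp only [hvdef]; ring
    rw [h1, one_div, ← Real.exp_neg, Real.log_exp, neg_neg]
  have hv0 : v 0 = u₀ := by
    have hm : min (A0*lam^0) Au = A0 := by
      rw [pow_zero, mul_one]; exact min_eq_left hA0Au
    simp only [hvdef, hm]
    rw [hA0def, one_div, Real.log_inv, neg_neg, Real.exp_log (by linarith)]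
    ring
  have hvn : v n = u := by
    have hm : min (A0*lam^n) Au = Au := min_eq_right hnspec
    simp only [hvdef, hm, hexpAu]
    ring
  have hv_mono : ∀ i, v i ≤ v (i+1) := by
    intro i
    have h1 : A0*lam^i ≤ A0*lam^(i+1) :=
      mul_le_mul_of_nonneg_left (pow_le_pow_right₀ (by linarith) (Nat.le_succ i)) hA0pos.le
    have h2 : min (A0*lam^i) Au ≤ min (A0*lam^(i+1)) Au := by
      exact le_min (le_trans (min_le_left _ _) h1) (min_le_right _ _)
    simp only [hvdef]
    have := Real.exp_le_exp.mpr (neg_le_neg h2)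
    linarith
  set tt : ℕ → ℝ := fun i => Real.sqrt (v i / u) with httdef
  have htt_pos : ∀ i, 0 < tt i := by
    intro i
    apply Real.sqrt_pos.mpr
    exact div_pos (hv_pos i) hu0
  have htt_le1 : ∀ i, tt i ≤ 1 := by
    intro i
    rw [show (1:ℝ) = Real.sqrt 1 by simp]
    apply Real.sqrt_le_sqrt
    rw [div_le_one hu0]
    exact hv_le_u i
  have htt_sq : ∀ i, (tt i)^2 * u = v i := by
    intro i
    simp only [httdef]
    rw [Real.sq_sqrt (div_nonneg (hv_pos i).le hu0.le)]
    field_simp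
  have htt_mono : ∀ i, tt i ≤ tt (i+1) := by
    intro i
    apply Real.sqrt_le_sqrt
    exact div_le_div_of_nonneg_right (hv_mono i) hu0.le
  have httn : tt n = 1 := by
    simp only [httdef, hvn]
    rw [div_self hu0.ne']
    exact Real.sqrt_one
  have hmem : ∀ s : ℝ, 0 ≤ s → s ≤ 1 → ((s:ℂ) * z) ∈ ball (0:ℂ) 1 := by
    intro s hs0 hs1
    simp only [mem_ball, Complex.dist_eq, sub_zero, norm_mul, Complex.norm_real, Real.norm_eq_abs]
    calc |s| * ‖z‖ ≤ 1 * ‖z‖ := by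
          apply mul_le_mul_of_nonneg_right _ (norm_nonneg z)
          rwa [_root_.abs_of_nonneg hs0]
    _ < 1 := by rw [one_mul]; exact hr1
  have hsqrt_lam : Real.sqrt (1 - 1/lam) = 1/(2*M) := by
    have h1 : 1 - 1/lam = u₀ := by
      rw [hlamdef]
      field_simp
      ring
    rw [h1, hu₀def, show 1/(4*M^2) = (1/(2*M))^2 by field_simp; ring]
    exact Real.sqrt_sq (by positivity)
  -- key: delta bound implies norm step
  have hstep : ∀ w₁ w₂ : ℂ, w₁ ∈ ball (0:ℂ) 1 → w₂ ∈ ball (0:ℂ) 1 →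
      dirDelta w₁ w₂ ≤ Real.sqrt (1 - 1/lam) →
      (1 - ‖f w₁‖) / 3 ≤ 1 - ‖f w₂‖ := by
    intro w₁ w₂ hw₁ hw₂ hδ
    apply pseudo_step _ _ (hmap _ hw₁) (hmap _ hw₂)
    have h1 := hLip w₁ hw₁ w₂ hw₂
    have hδ0 : 0 ≤ dirDelta w₁ w₂ := Real.sqrt_nonneg _
    calc pseudoHyp (f w₁) (f w₂) ≤ L * dirDelta w₁ w₂ := h1
    _ ≤ M * dirDelta w₁ w₂ := mul_le_mul_of_nonneg_right hLM hδ0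
    _ ≤ M * (1/(2*M)) := by
        rw [← hsqrt_lam]
        exact mul_le_mul_of_nonneg_left hδ hM0.le
    _ = 1/2 := by field_simp
  -- main induction
  have main : ∀ i, i ≤ n → (1/3:ℝ)^(i+1) ≤ 1 - ‖f ((tt i : ℂ) * z)‖ := by
    intro i
    induction i with
    | zero =>
      intro _
      have hδ : dirDelta 0 ((tt 0 : ℂ)*z) ≤ Real.sqrt (1 - 1/lam) := by
        apply dirDelta_zero_le z hr1 hz0 _ lam (htt_pos 0) (htt_le1 0) hlamle
        rw [← hudef, htt_sq 0, hv0]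
        rw [Gg, if_neg hu₀pos.ne', div_le_iff₀ hu₀pos]
        have h1 := Real.log_le_sub_one_of_pos (show (0:ℝ) < 1/(1-u₀) by
          apply one_div_pos.mpr; linarith)
        have heq : 1/(1-u₀) - 1 = lam * u₀ := by
          have h1m : (1:ℝ) - u₀ ≠ 0 := ne_of_gt (by linarith)
          rw [hlamdef]; field_simp; ring
        rw [← hA0def] at h1 ⊢
        linarith
      have := hstep 0 ((tt 0 : ℂ)*z) (mem_ball_self one_pos)
        (hmem (tt 0) (htt_pos 0).le (htt_le1 0)) (by simpa using hδ)
      rw [h0, norm_zero] at this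
      calc ((1:ℝ)/3)^(0+1) = (1-0)/3 := by norm_num
      _ ≤ 1 - ‖f ((tt 0 : ℂ)*z)‖ := this
    | succ i ih =>
      intro hin
      have hprev := ih (Nat.le_of_succ_le hin)
      have hAcond : Real.log (1/(1 - (tt (i+1))^2 * Complex.normSq z)) ≤
          lam * Real.log (1/(1 - (tt i)^2 * Complex.normSq z)) := by
        rw [← hudef, htt_sq, htt_sq, hAv, hAv]
        rcases le_total (A0*lam^i) Au with h|h
        · rw [min_eq_left h]
          calc min (A0*lam^(i+1)) Au ≤ A0*lam^(i+1) := min_le_left _ _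
          _ = lam * (A0*lam^i) := by ring
        · rw [min_eq_right h]
          calc min (A0*lam^(i+1)) Au ≤ Au := min_le_right _ _
          _ ≤ lam * Au := le_mul_of_one_le_left hAupos.le hlamle
      have hδ := dirDelta_ray_le z hr1 hz0 (tt i) (tt (i+1)) lam (htt_pos i)
        (htt_mono i) (htt_le1 (i+1)) hlamle hAcond
      have hstep2 := hstep ((tt i : ℂ)*z) ((tt (i+1) : ℂ)*z)
        (hmem (tt i) (htt_pos i).le (htt_le1 i))
        (hmem (tt (i+1)) (htt_pos (i+1)).le (htt_le1 (i+1))) hδ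
      calc ((1:ℝ)/3)^(i+1+1) = ((1:ℝ)/3)^(i+1) / 3 := by ring
      _ ≤ (1 - ‖f ((tt i : ℂ)*z)‖)/3 := by linarith
      _ ≤ 1 - ‖f ((tt (i+1) : ℂ)*z)‖ := hstep2
  have hfz : (1/3:ℝ)^(n+1) ≤ 1 - ‖f z‖ := by
    have := main n le_rfl
    rw [httn] at this
    simpa using this
  -- final arithmetic
  set ε := 1 - r with hεdef
  have hεpos : 0 < ε := by rw [hεdef]; linarith
  have hεle : ε ≤ ε₀ := by rw [hεdef]; linarith
  set X := Real.log (1/ε) with hXdef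
  have hX : X₀ ≤ X := by
    rw [hXdef, Real.le_log_iff_exp_le (one_div_pos.mpr hεpos)]
    rw [le_div_iff₀ hεpos]
    calc Real.exp X₀ * ε ≤ Real.exp X₀ * Real.exp (-X₀) := by
          apply mul_le_mul_of_nonneg_left (le_trans hεle hε₀exp) (Real.exp_pos _).le
    _ = 1 := by rw [← Real.exp_add]; simp
  have hXpos : 0 < X := lt_of_lt_of_le hX₀pos hX
  have hAuX : Au ≤ X := by
    rw [hAudef, hXdef]
    apply Real.log_le_log (one_div_pos.mpr (by linarith))
    apply one_div_le_one_div_of_le hεpos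
    rw [hureq, hεdef]
    linarith [mul_nonneg hr0.le (sub_nonneg.mpr hr1.le)]
  -- core bound : (n+1) log 3 ≤ α X
  have hcore : ((n:ℝ)+1) * Real.log 3 ≤ α * X := by
    have hlogX0 : 0 ≤ Real.log X := Real.log_nonneg (le_trans hX₀1 hX)
    have hn1 : ((n:ℝ)+1) * Real.log 3 ≤ bet * Real.log X + C := by
      rcases Nat.eq_zero_or_pos n with hn0 | hnpos
      · rw [hn0]
        simp only [Nat.cast_zero, zero_add, one_mul]
        have hb1 := mul_nonneg hbet.le hlogX0
        have hb2 := mul_nonneg hbet.le (abs_nonneg (Real.log A0))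
        rw [hCdef]
        linarith
      · have hmin := hnmin (n-1) (Nat.sub_lt hnpos one_pos)
        push_neg at hmin
        have hlog : Real.log A0 + ((n:ℝ)-1) * Real.log lam < Real.log Au := by
          have h1 : Real.log (A0 * lam^(n-1)) < Real.log Au :=
            Real.log_lt_log (by positivity) hmin
          rw [Real.log_mul hA0pos.ne' (by positivity), Real.log_pow] at h1
          have : ((n-1 : ℕ) : ℝ) = (n:ℝ) - 1 := by
            rw [Nat.cast_sub hnpos]; simp
          rw [this] at h1
          linarith
        have h2 : ((n:ℝ)-1) * Real.log lam ≤ Real.log Au - Real.log A0 := by linarith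
        have hlogAuX : Real.log Au ≤ Real.log X := Real.log_le_log hAupos hAuX
        have h3 : ((n:ℝ)-1) * Real.log 3 ≤ bet * (Real.log Au - Real.log A0) := by
          rw [hbetdef, div_mul_eq_mul_div, le_div_iff₀ hloglam]
          calc ((n:ℝ)-1) * Real.log 3 * Real.log lam
              = Real.log 3 * (((n:ℝ)-1) * Real.log lam) := by ring
          _ ≤ Real.log 3 * (Real.log Au - Real.log A0) :=
              mul_le_mul_of_nonneg_left h2 hlog3.le
        have h4 : bet * (Real.log Au - Real.log A0) ≤ bet * Real.log X + bet * |Real.log A0| := by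
          have ha := neg_abs_le (Real.log A0)
          linarith [mul_le_mul_of_nonneg_left hlogAuX hbet.le,
            mul_le_mul_of_nonneg_left (neg_abs_le (Real.log A0)) hbet.le]
        rw [hCdef]
        linarith
    have hlogXle : Real.log X ≤ 2 * Real.sqrt X := by
      have h1 := Real.log_le_rpow_div hXpos.le (by norm_num : (0:ℝ) < 1/2)
      rw [← Real.sqrt_eq_rpow] at h1
      linarith
    have hsX : 4*bet/α ≤ Real.sqrt X := by
      have h1 : Real.sqrt ((4*bet/α)^2) ≤ Real.sqrt X :=
        Real.sqrt_le_sqrt (le_trans hX₀a hX)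
      rwa [Real.sqrt_sq (by positivity)] at h1
    have hsXsq : Real.sqrt X ^ 2 = X := Real.sq_sqrt hXpos.le
    have h5 : 2*bet*Real.sqrt X ≤ (α/2) * X := by
      have h6 : 4*bet ≤ α * Real.sqrt X := by
        rw [div_le_iff₀ hα] at hsX
        linarith [mul_comm (Real.sqrt X) α]
      have h8 : 0 ≤ (α*Real.sqrt X - 4*bet) * Real.sqrt X :=
        mul_nonneg (by linarith) (Real.sqrt_nonneg X)
      conv_rhs => rw [← hsXsq]
      linarith [h8]
    have hCle : C ≤ (α/2) * X := by
      have h7 := le_trans hX₀b hX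
      rw [div_le_iff₀ hα] at h7
      linarith
    calc ((n:ℝ)+1) * Real.log 3 ≤ bet * Real.log X + C := hn1
    _ ≤ bet * (2 * Real.sqrt X) + C := by
        linarith [mul_le_mul_of_nonneg_left hlogXle hbet.le]
    _ ≤ (α/2)*X + (α/2)*X := by linarith
    _ = α * X := by ring
  -- finish
  have hfin : ε ^ α ≤ ((1:ℝ)/3)^(n+1) := by
    have hrpow : ε^α = Real.exp (α * Real.log ε) := by
      rw [Real.rpow_def_of_pos hεpos, mul_comm]
    have hpow3 : ((1:ℝ)/3)^(n+1) = Real.exp (-((((n:ℕ):ℝ)+1) * Real.log 3)) := by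
      rw [← Real.rpow_natCast ((1:ℝ)/3) (n+1), Real.rpow_def_of_pos (by norm_num)]
      congr 1
      rw [one_div, Real.log_inv]
      push_cast
      ring
    rw [hrpow, hpow3]
    apply Real.exp_le_exp.mpr
    have hlogε : Real.log ε = -X := by
      rw [hXdef, one_div, Real.log_inv]; ring
    rw [hlogε]
    linarith [hcore]
  have : (1 - r)^α ≤ 1 - ‖f z‖ := le_trans (by rw [← hεdef]) (le_trans hfin hfz)
  linarith
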